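/- In the quotient model with Delsarte dual, let U = (W+Γ)/Γ ⊆ 𝕍(k,q^m) = 𝔽_{q^m}^n/Γ where W ∩ Γ = {0}, and let U^d = (W+Γ^⊥)/Γ^⊥ ⊆ 𝕍(n−k,q^m) = 𝔽_{q^m}^n/Γ^⊥. Then dim_{𝔽_q}(U^d) = n − (k − t_s), where t_s is the minimum dimension of an 𝔽_{q^m}-subspace of 𝕍(k,q^m) having defect n−k with respect to U. Moreover, the following are equivalent: (1) dim_{𝔽_q}(U^d) = n; (2) Γ^⊥ ∩ W = {0}; (3) w_U(H) < n−1 for every 𝔽_{q^m}-hyperplane H of 𝕍(k,q^m). Furthermore, if any of (1), (2), (3) holds, then (U^d)^d = U (where (U^d)^d = (W+(Γ^⊥)^⊥)/(Γ^⊥)^⊥ = (W+Γ)/Γ). -/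

import Mathlib

open Module Submodule


section AuxLemmas

/-- Rank-nullity for the image of a submodule under a linear map. -/
lemma aux_finrank_map_add {R M N : Type*} [Field R] [AddCommGroup M] [AddCommGroup N]
    [Module R M] [Module R N] (f : M →ₗ[R] N) (p : Submodule R M) [FiniteDimensional R ↥p] :
    finrank R ↥(p.map f) + finrank R ↥(p ⊓ LinearMap.ker f) = finrank R ↥p := by
  have h2 : finrank R ↥(p ⊓ LinearMap.ker f)
      = finrank R ↥(LinearMap.ker (f.domRestrict p)) := by
    rw [LinearMap.ker_domRestrict, ← Submodule.map_comap_subtype,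
      Submodule.finrank_map_subtype_eq]
  rw [← LinearMap.range_domRestrict, h2]
  exact LinearMap.finrank_range_add_finrank_ker (f.domRestrict p)

variable {K L V : Type*} [Field K] [Field L] [Algebra K L]
  [AddCommGroup V] [Module K V] [Module L V] [IsScalarTower K L V]

lemma aux_span_le (X : Submodule K V) [FiniteDimensional K ↥X] :
    finrank L ↥(span L (X : Set V)) ≤ finrank K ↥X := by
  classical
  set b := Module.finBasis K ↥X with hb
  set v : Fin (finrank K ↥X) → V := fun i => ((b i : ↥X) : V) with hv
  have hspan : span K (Set.range v) = X := by
    have : Set.range v = X.subtype '' (Set.range b) := by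
      rw [← Set.range_comp]; rfl
    rw [this, Submodule.span_image, Basis.span_eq, Submodule.map_subtype_top]
  have h1 : span L (X : Set V) = span L (Set.range v) := by
    conv_lhs => rw [← hspan]
    rw [Submodule.span_span_of_tower]
  rw [h1]
  have := finrank_range_le_card (R := L) v
  simpa [Set.finrank] using this

lemma aux_span_eq [FiniteDimensional L V] [FiniteDimensional K L]
    {W X : Submodule K V}
    (hWstar : finrank L ↥(span L (W : Set V)) = finrank K ↥W) (hX : X ≤ W) :
    finrank L ↥(span L (X : Set V)) = finrank K ↥X := by
  haveI : FiniteDimensional K V := Module.Finite.trans L V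
  obtain ⟨Y', hY'⟩ := Submodule.exists_isCompl (X.comap W.subtype)
  set Y : Submodule K V := Y'.map W.subtype with hYdef
  have hXmap : (X.comap W.subtype).map W.subtype = X := by
    rw [Submodule.map_comap_subtype, inf_eq_right.mpr hX]
  have hsup : X ⊔ Y = W := by
    rw [← hXmap, hYdef, ← Submodule.map_sup, hY'.sup_eq_top, Submodule.map_subtype_top]
  have hdim : finrank K ↥X + finrank K ↥Y = finrank K ↥W := by
    rw [← hXmap, hYdef, Submodule.finrank_map_subtype_eq, Submodule.finrank_map_subtype_eq]
    exact Submodule.finrank_add_eq_of_isCompl hY'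
  have h1 : finrank L ↥(span L (X : Set V)) ≤ finrank K ↥X := aux_span_le X
  have h2 : finrank L ↥(span L (Y : Set V)) ≤ finrank K ↥Y := aux_span_le Y
  have hsub : span L (W : Set V) ≤ span L (X : Set V) ⊔ span L (Y : Set V) := by
    rw [← hsup, Submodule.span_le]
    rintro v hv
    obtain ⟨a, ha, b, hb, rfl⟩ := Submodule.mem_sup.mp hv
    exact Submodule.add_mem _ (Submodule.mem_sup_left (Submodule.subset_span ha))
      (Submodule.mem_sup_right (Submodule.subset_span hb))
  have h3 : finrank L ↥(span L (X : Set V) ⊔ span L (Y : Set V))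
      ≤ finrank L ↥(span L (X : Set V)) + finrank L ↥(span L (Y : Set V)) := by
    have := Submodule.finrank_sup_add_finrank_inf_eq (span L (X : Set V)) (span L (Y : Set V))
    omega
  have h4 := Submodule.finrank_mono hsub
  omega

end AuxLemmas
section
variable {K L V : Type*} [Field K] [Field L] [Algebra K L]
  [AddCommGroup V] [Module K V] [Module L V] [IsScalarTower K L V]

/-- Dimension of the orthogonal complement within the subgeometry `W`. -/
lemma aux_orth_dim [FiniteDimensional L V] [FiniteDimensional K L]
    (n : ℕ) (hV : finrank L V = n)
    (W : Submodule K V) (hW : finrank K ↥W = n)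
    (hWstar : finrank L ↥(span L (W : Set V)) = n)
    (σ : V →ₗ[L] V →ₗ[L] L)
    (hσnd : LinearMap.BilinForm.Nondegenerate σ)
    (hσrefl : LinearMap.IsRefl σ)
    (hσW : ∀ x ∈ W, ∀ y ∈ W, σ x y ∈ (algebraMap K L).range)
    (X : Submodule K V) (hX : X ≤ W) :
    finrank K ↥(W ⊓ (LinearMap.BilinForm.orthogonal σ
      (span L (X : Set V))).restrictScalars K) + finrank K ↥X = n := by
  classical
  haveI : FiniteDimensional K V := Module.Finite.trans L V
  have hWstar' : finrank L ↥(span L (W : Set V)) = finrank K ↥W := by rw [hWstar, hW]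
  have horthtop : LinearMap.BilinForm.orthogonal σ (⊤ : Submodule L V) = ⊥ := by
    rw [Submodule.eq_bot_iff]
    intro v hv
    rw [LinearMap.BilinForm.mem_orthogonal_iff] at hv
    exact hσnd.1 v fun u => hσrefl u v (hv u Submodule.mem_top)
  have hdims : ∀ S : Submodule L V,
      finrank L ↥S + finrank L ↥(LinearMap.BilinForm.orthogonal σ S) = n := by
    intro S
    have h := LinearMap.BilinForm.finrank_add_finrank_orthogonal (B := σ) hσrefl S
    rw [horthtop, hV, inf_bot_eq, finrank_bot] at h
    simpa using h
  set S := span L (X : Set V) with hSdef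
  set O := LinearMap.BilinForm.orthogonal σ S with hOdef
  set P : Submodule K V := W ⊓ O.restrictScalars K with hPdef
  have hPW : P ≤ W := inf_le_left
  have hPs : finrank L ↥(span L (P : Set V)) = finrank K ↥P := aux_span_eq hWstar' hPW
  have hSX : finrank L ↥S = finrank K ↥X := aux_span_eq hWstar' hX
  -- upper bound
  have hup : finrank K ↥P + finrank K ↥X ≤ n := by
    have h1 : span L (P : Set V) ≤ O := Submodule.span_le.mpr (fun v hv => hv.2)
    have h2 := Submodule.finrank_mono h1
    have h3 := hdims S
    rw [← hOdef] at h3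
    omega
  -- lower bound via rank-nullity over K
  set R0 : Submodule K L := LinearMap.range (Algebra.linearMap K L) with hR0
  have hmemR : ∀ v ∈ W, ∀ u ∈ W, σ u v ∈ R0 := by
    intro v hv u hu
    obtain ⟨c, hc⟩ := hσW u hu v hv
    exact ⟨c, hc⟩
  let φ : ↥W →ₗ[K] (↥X →ₗ[K] ↥R0) :=
    { toFun := fun w =>
      { toFun := fun x => ⟨σ (x : V) (w : V), hmemR w w.2 x (hX x.2)⟩
        map_add' := fun a b => by
          ext
          simp [map_add]
        map_smul' := fun c x => by
          ext
          simp [LinearMap.map_smul_of_tower] }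
      map_add' := fun a b => by
        ext x
        simp
      map_smul' := fun c w => by
        ext x
        simp [LinearMap.map_smul_of_tower] }
  have hker : LinearMap.ker φ = (O.restrictScalars K).comap W.subtype := by
    ext w
    simp only [LinearMap.mem_ker, Submodule.mem_comap, Submodule.restrictScalars_mem,
      Submodule.coe_subtype]
    constructor
    · intro h
      rw [hOdef, LinearMap.BilinForm.mem_orthogonal_iff]
      intro u hu
      have hXk : (X : Set V) ⊆ ↑(LinearMap.ker (σ.flip (w : V))) := by
        intro x hx
        have : σ (x : V) (w : V) = 0 := by
          have h1 := congrArg Subtype.val (LinearMap.ext_iff.mp h ⟨x, hx⟩)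
          simpa [φ] using h1
        simpa using this
      have h2 := Submodule.span_le.mpr hXk
      have h3 := h2 hu
      simpa using h3
    · intro h
      apply LinearMap.ext
      intro x
      apply Subtype.ext
      have : σ (x : V) (w : V) = 0 := by
        rw [hOdef, LinearMap.BilinForm.mem_orthogonal_iff] at h
        exact h (x : V) (Submodule.subset_span x.2)
      simpa [φ] using this
  have hkerdim : finrank K ↥(LinearMap.ker φ) = finrank K ↥P := by
    rw [hker, ← Submodule.finrank_map_subtype_eq W, Submodule.map_comap_subtype]
  have hrank := LinearMap.finrank_range_add_finrank_ker (V := ↥W) (V₂ := ↥X →ₗ[K] ↥R0) φ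
  rw [hkerdim, hW] at hrank
  have hrle : finrank K ↥(LinearMap.range φ) ≤ finrank K ↥X := by
    have h1 : finrank K ↥(LinearMap.range φ) ≤ finrank K (↥X →ₗ[K] ↥R0) :=
      Submodule.finrank_le (LinearMap.range φ)
    have h2 : finrank K (↥X →ₗ[K] ↥R0) = finrank K ↥X * finrank K ↥R0 :=
      Module.finrank_linearMap K K ↥X ↥R0
    have h3 : finrank K ↥R0 ≤ 1 := by
      have := LinearMap.finrank_range_le (Algebra.linearMap K L)
      simpa using this
    have h4 : finrank K ↥X * finrank K ↥R0 ≤ finrank K ↥X * 1 :=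
      Nat.mul_le_mul_left _ h3
    omega
  omega
end

/-- The weight of the `𝔽_{q^m}`-subspace `T` with respect to the `𝔽_q`-subspace `U`:
`w_U(T) = dim_{𝔽_q}(U ∩ T)`. -/
noncomputable def wt {K L V : Type*} [Field K] [Field L] [Algebra K L]
    [AddCommGroup V] [Module K V] [Module L V] [IsScalarTower K L V]
    (U : Submodule K V) (T : Submodule L V) : ℕ :=
  Module.finrank K ↥(U ⊓ T.restrictScalars K)

/-- The defect of `T` with respect to `U`: `ε_U(T) = w_U(T) − dim_{𝔽_{q^m}}(T)`. -/
noncomputable def defect {K L V : Type*} [Field K] [Field L] [Algebra K L]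
    [AddCommGroup V] [Module K V] [Module L V] [IsScalarTower K L V]
    (U : Submodule K V) (T : Submodule L V) : ℤ :=
  (wt U T : ℤ) - Module.finrank L ↥T

/-- `ε_U(r)`: the maximum defect of `r`-dimensional `𝔽_{q^m}`-subspaces w.r.t. `U`. -/
noncomputable def maxDefect {K V : Type*} (L : Type*) [Field K] [Field L] [Algebra K L]
    [AddCommGroup V] [Module K V] [Module L V] [IsScalarTower K L V]
    (U : Submodule K V) (r : ℕ) : ℤ :=
  sSup {e : ℤ | ∃ T : Submodule L V, Module.finrank L ↥T = r ∧ e = defect U T}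

/-- Proposition 1.27: dimension of the Delsarte dual, and equivalent
non-degeneracy conditions. `U = (W+Γ)/Γ`, `U^d = (W+Γ^⊥)/Γ^⊥`. -/
theorem statement7 {K L Vn : Type*} [Field K] [Field L] [Algebra K L]
    [Fintype K] [Fintype L]
    [AddCommGroup Vn] [Module K Vn] [Module L Vn] [IsScalarTower K L Vn]
    [FiniteDimensional L Vn]
    (m n k : ℕ) (hm : 0 < m) (hk : 0 < k) (hkn : k < n)
    (hmL : Module.finrank K L = m) (hVn : Module.finrank L Vn = n)
    (W : Submodule K Vn) (hW : Module.finrank K ↥W = n)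
    (hWstar : Module.finrank L ↥(Submodule.span L (W : Set Vn)) = n)
    -- `σ` is the `𝔽_{q^m}`-extension of a non-degenerate reflexive bilinear form `σ'` on `W`
    (σ : Vn →ₗ[L] Vn →ₗ[L] L)
    (hσnd : LinearMap.BilinForm.Nondegenerate σ)
    (hσrefl : LinearMap.IsRefl σ)
    (hσW : ∀ x ∈ W, ∀ y ∈ W, σ x y ∈ (algebraMap K L).range)
    (hσ'nd : ∀ x ∈ W, (∀ y ∈ W, σ x y = 0) → x = 0)
    (Γ : Submodule L Vn) (hΓ : Module.finrank L ↥Γ = n - k)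
    (hΓW : Γ.restrictScalars K ⊓ W = ⊥)
    -- `U = (W+Γ)/Γ` and its Delsarte dual `U^d = (W+Γ^⊥)/Γ^⊥`
    (U : Submodule K (Vn ⧸ Γ)) (hU : U = Submodule.map (Γ.mkQ.restrictScalars K) W)
    (Ud : Submodule K (Vn ⧸ LinearMap.BilinForm.orthogonal σ Γ))
    (hUd : Ud = Submodule.map ((LinearMap.BilinForm.orthogonal σ Γ).mkQ.restrictScalars K) W)
    -- `t_s`: the minimum dimension of a subspace of defect `n−k` w.r.t. `U`
    (ts : ℕ) (hts : ts = sInf {r : ℕ | ∃ T : Submodule L (Vn ⧸ Γ),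
      Module.finrank L ↥T = r ∧ defect U T = (n : ℤ) - (k : ℤ)}) :
    -- `dim_{𝔽_q}(U^d) = n − (k − t_s)`
    Module.finrank K ↥Ud = n - (k - ts) ∧
    -- (1) ↔ (2)
    (Module.finrank K ↥Ud = n ↔
      (LinearMap.BilinForm.orthogonal σ Γ).restrictScalars K ⊓ W = ⊥) ∧
    -- (1) ↔ (3)
    (Module.finrank K ↥Ud = n ↔
      ∀ H : Submodule L (Vn ⧸ Γ), Module.finrank L ↥H + 1 = k → wt U H + 1 < n) ∧
    -- if any of the equivalent conditions holds then `(U^d)^d = U`, i.e. `Γ^⊥⊥ = Γ`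
    (Module.finrank K ↥Ud = n →
      LinearMap.BilinForm.orthogonal σ (LinearMap.BilinForm.orthogonal σ Γ) = Γ) := by
  classical
  haveI : FiniteDimensional K Vn := Module.Finite.trans L Vn
  have hWstar' : finrank L ↥(span L (W : Set Vn)) = finrank K ↥W := by rw [hWstar, hW]
  have hA : ∀ X : Submodule K Vn, X ≤ W →
      finrank L ↥(span L (X : Set Vn)) = finrank K ↥X :=
    fun X hX => aux_span_eq hWstar' hX
  have horthtop : LinearMap.BilinForm.orthogonal σ (⊤ : Submodule L Vn) = ⊥ := by
    rw [Submodule.eq_bot_iff]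
    intro v hv
    rw [LinearMap.BilinForm.mem_orthogonal_iff] at hv
    exact hσnd.1 v fun u => hσrefl u v (hv u Submodule.mem_top)
  have hdims : ∀ S : Submodule L Vn,
      finrank L ↥S + finrank L ↥(LinearMap.BilinForm.orthogonal σ S) = n := by
    intro S
    have h := LinearMap.BilinForm.finrank_add_finrank_orthogonal (B := σ) hσrefl S
    rw [horthtop, hVn, inf_bot_eq, finrank_bot] at h
    simpa using h
  have hdouble : LinearMap.BilinForm.orthogonal σ (LinearMap.BilinForm.orthogonal σ Γ) = Γ :=
    LinearMap.BilinForm.orthogonal_orthogonal hσnd hσrefl Γ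
  have hΓdim : finrank L ↥(LinearMap.BilinForm.orthogonal σ Γ) = k := by
    have := hdims Γ
    rw [hΓ] at this
    omega
  set d : ℕ := finrank K ↥(W ⊓ (LinearMap.BilinForm.orthogonal σ Γ).restrictScalars K) with hd
  -- F1 : dim of the dual
  have hUdd : finrank K ↥Ud + d = n := by
    rw [hUd]
    have h := aux_finrank_map_add ((LinearMap.BilinForm.orthogonal σ Γ).mkQ.restrictScalars K) W
    have hker : LinearMap.ker ((LinearMap.BilinForm.orthogonal σ Γ).mkQ.restrictScalars K) = (LinearMap.BilinForm.orthogonal σ Γ).restrictScalars K := by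
      rw [LinearMap.ker_restrictScalars, Submodule.ker_mkQ]
    rw [hker, hW] at h
    exact h
  -- F2 : d ≤ k
  have hdk : d ≤ k := by
    have h1 : finrank L ↥(span L ((W ⊓ (LinearMap.BilinForm.orthogonal σ Γ).restrictScalars K : Submodule K Vn) : Set Vn)) = d :=
      hA _ inf_le_left
    have h2 : span L ((W ⊓ (LinearMap.BilinForm.orthogonal σ Γ).restrictScalars K : Submodule K Vn) : Set Vn) ≤ LinearMap.BilinForm.orthogonal σ Γ :=
      Submodule.span_le.mpr (fun v hv => hv.2)
    have h3 := Submodule.finrank_mono h2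
    rw [hΓdim] at h3
    omega
  -- quotient lemmas
  have hcomap_ge : ∀ T : Submodule L (Vn ⧸ Γ), Γ ≤ T.comap Γ.mkQ := by
    intro T x hx
    have h0 : Γ.mkQ x = 0 := by
      rw [Submodule.mkQ_apply]
      exact (Submodule.Quotient.mk_eq_zero Γ).mpr hx
    simp only [Submodule.mem_comap, h0]
    exact T.zero_mem
  have hSdim : ∀ S : Submodule L Vn, Γ ≤ S →
      finrank L ↥(S.map Γ.mkQ) + (n - k) = finrank L ↥S := by
    intro S hS
    have h := aux_finrank_map_add Γ.mkQ S
    rw [Submodule.ker_mkQ, inf_eq_right.mpr hS, hΓ] at h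
    exact h
  have hTdim : ∀ T : Submodule L (Vn ⧸ Γ),
      finrank L ↥(T.comap Γ.mkQ) = (n - k) + finrank L ↥T := by
    intro T
    have h := hSdim (T.comap Γ.mkQ) (hcomap_ge T)
    rw [Submodule.map_comap_eq, Submodule.range_mkQ, top_inf_eq] at h
    omega
  have hwt : ∀ T : Submodule L (Vn ⧸ Γ),
      wt U T = finrank K ↥(W ⊓ (T.comap Γ.mkQ).restrictScalars K) := by
    intro T
    have himg : U ⊓ T.restrictScalars K
        = (W ⊓ (T.comap Γ.mkQ).restrictScalars K).map (Γ.mkQ.restrictScalars K) := by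
      ext x
      simp only [Submodule.mem_inf, Submodule.restrictScalars_mem, Submodule.mem_map,
        LinearMap.restrictScalars_apply, Submodule.mem_comap, hU]
      constructor
      · rintro ⟨⟨w, hw, rfl⟩, hxT⟩
        exact ⟨w, ⟨hw, hxT⟩, rfl⟩
      · rintro ⟨w, ⟨hw1, hw2⟩, rfl⟩
        exact ⟨⟨w, hw1, rfl⟩, hw2⟩
    rw [wt, himg]
    have h := aux_finrank_map_add (Γ.mkQ.restrictScalars K)
      (W ⊓ (T.comap Γ.mkQ).restrictScalars K)
    have hker : LinearMap.ker (Γ.mkQ.restrictScalars K) = Γ.restrictScalars K := by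
      rw [LinearMap.ker_restrictScalars, Submodule.ker_mkQ]
    rw [hker] at h
    have hbot : (W ⊓ (T.comap Γ.mkQ).restrictScalars K) ⊓ Γ.restrictScalars K = ⊥ := by
      rw [← le_bot_iff, ← hΓW]
      exact fun x hx => ⟨hx.2, hx.1.1⟩
    rw [hbot, finrank_bot] at h
    omega
  have hwt_le : ∀ T : Submodule L (Vn ⧸ Γ), wt U T ≤ (n - k) + finrank L ↥T := by
    intro T
    rw [hwt T]
    have h1 := hA _ (inf_le_left : W ⊓ (T.comap Γ.mkQ).restrictScalars K ≤ W)
    have h2 : span L ((W ⊓ (T.comap Γ.mkQ).restrictScalars K : Submodule K Vn) : Set Vn)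
        ≤ T.comap Γ.mkQ := Submodule.span_le.mpr (fun v hv => hv.2)
    have h3 := Submodule.finrank_mono h2
    rw [hTdim T] at h3
    omega
  -- Lemma F : lower bound
  have hF : ∀ T : Submodule L (Vn ⧸ Γ), wt U T = (n - k) + finrank L ↥T →
      k ≤ d + finrank L ↥T := by
    intro T hwT
    set S := T.comap Γ.mkQ with hSdef
    set X : Submodule K Vn := W ⊓ S.restrictScalars K with hXdef
    have hXW : X ≤ W := inf_le_left
    have hXd : finrank K ↥X = finrank L ↥S := by
      rw [← hwt T, hwT, hTdim T]
    have hspanS : span L (X : Set Vn) = S := by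
      apply Submodule.eq_of_le_of_finrank_le (Submodule.span_le.mpr (fun v hv => hv.2))
      rw [hA X hXW, hXd]
    have hΘle : LinearMap.BilinForm.orthogonal σ S ≤ LinearMap.BilinForm.orthogonal σ Γ :=
      LinearMap.BilinForm.orthogonal_le (hcomap_ge T)
    have hC := aux_orth_dim n hVn W hW hWstar σ hσnd hσrefl hσW X hXW
    rw [hspanS] at hC
    have hle : W ⊓ (LinearMap.BilinForm.orthogonal σ S).restrictScalars K
        ≤ W ⊓ (LinearMap.BilinForm.orthogonal σ Γ).restrictScalars K :=
      inf_le_inf_left _ (fun v hv => hΘle hv)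
    have hmono := Submodule.finrank_mono hle
    rw [← hd] at hmono
    have hTd := hTdim T
    rw [← hSdef] at hTd
    omega
  -- Lemma E : construction
  have hE : ∀ X0 : Submodule K Vn, X0 ≤ W ⊓ (LinearMap.BilinForm.orthogonal σ Γ).restrictScalars K →
      ∃ T : Submodule L (Vn ⧸ Γ),
        finrank L ↥T + finrank K ↥X0 = k ∧ wt U T + finrank K ↥X0 = n := by
    intro X0 hX0
    have hX0W : X0 ≤ W := hX0.trans inf_le_left
    have hX0Θ : span L (X0 : Set Vn) ≤ LinearMap.BilinForm.orthogonal σ Γ :=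
      Submodule.span_le.mpr (fun v hv => (hX0 hv).2)
    have hed : finrank K ↥X0 ≤ d := by
      rw [hd]
      exact Submodule.finrank_mono hX0
    set X : Submodule K Vn := W ⊓ (LinearMap.BilinForm.orthogonal σ
      (span L (X0 : Set Vn))).restrictScalars K with hXdef
    have hC := aux_orth_dim n hVn W hW hWstar σ hσnd hσrefl hσW X0 hX0W
    rw [← hXdef] at hC
    set S := span L (X : Set Vn) with hSdef
    have hXW : X ≤ W := inf_le_left
    have hSd : finrank L ↥S = finrank K ↥X := hA X hXW
    have hX0span : finrank L ↥(span L (X0 : Set Vn)) = finrank K ↥X0 := hA X0 hX0W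
    have hz : span L (X0 : Set Vn) ≤ LinearMap.BilinForm.orthogonal σ S := by
      rw [Submodule.span_le]
      intro z hz0
      rw [SetLike.mem_coe, LinearMap.BilinForm.mem_orthogonal_iff]
      intro s hs
      have hXk : (X : Set Vn) ⊆ ↑(LinearMap.ker (σ.flip z)) := by
        intro x hx
        have hxo : x ∈ LinearMap.BilinForm.orthogonal σ (span L (X0 : Set Vn)) := hx.2
        rw [LinearMap.BilinForm.mem_orthogonal_iff] at hxo
        have h1 : σ z x = 0 := hxo z (Submodule.subset_span hz0)
        simpa using hσrefl z x h1
      have h2 := Submodule.span_le.mpr hXk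
      have h3 := h2 hs
      simpa using h3
    have horthS : LinearMap.BilinForm.orthogonal σ S = span L (X0 : Set Vn) := by
      symm
      apply Submodule.eq_of_le_of_finrank_le hz
      have h1 := hdims S
      rw [hSd] at h1
      omega
    have hΓS : Γ ≤ S := by
      have h1 : LinearMap.BilinForm.orthogonal σ S ≤ LinearMap.BilinForm.orthogonal σ Γ := horthS ▸ hX0Θ
      have h2 := LinearMap.BilinForm.orthogonal_le (B := σ) h1
      rw [hdouble, LinearMap.BilinForm.orthogonal_orthogonal hσnd hσrefl S] at h2
      exact h2
    refine ⟨S.map Γ.mkQ, ?_, ?_⟩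
    · have h := hSdim S hΓS
      rw [hSd] at h
      omega
    · have hcm : (S.map Γ.mkQ).comap Γ.mkQ = S := by
        rw [Submodule.comap_map_eq, Submodule.ker_mkQ, sup_eq_left.mpr hΓS]
      rw [hwt _, hcm]
      have hle1 : X ≤ W ⊓ S.restrictScalars K :=
        le_inf hXW (fun v hv => Submodule.subset_span hv)
      have h1 := Submodule.finrank_mono hle1
      have h2 := hA _ (inf_le_left : W ⊓ S.restrictScalars K ≤ W)
      have h3 : span L ((W ⊓ S.restrictScalars K : Submodule K Vn) : Set Vn) ≤ S :=
        Submodule.span_le.mpr (fun v hv => hv.2)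
      have h4 := Submodule.finrank_mono h3
      omega
  -- the value of ts
  have htsA : (k - d) ∈ {r : ℕ | ∃ T : Submodule L (Vn ⧸ Γ),
      finrank L ↥T = r ∧ defect U T = (n : ℤ) - (k : ℤ)} := by
    obtain ⟨T, h1, h2⟩ := hE (W ⊓ (LinearMap.BilinForm.orthogonal σ Γ).restrictScalars K) le_rfl
    rw [← hd] at h1 h2
    refine ⟨T, by omega, ?_⟩
    show (wt U T : ℤ) - (finrank L ↥T : ℤ) = (n : ℤ) - (k : ℤ)
    omega
  have htslb : ∀ r ∈ {r : ℕ | ∃ T : Submodule L (Vn ⧸ Γ),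
      finrank L ↥T = r ∧ defect U T = (n : ℤ) - (k : ℤ)}, k - d ≤ r := by
    rintro r ⟨T, hT1, hT2⟩
    have hT2' : (wt U T : ℤ) - (finrank L ↥T : ℤ) = (n : ℤ) - (k : ℤ) := hT2
    have hwtT : wt U T = (n - k) + finrank L ↥T := by omega
    have := hF T hwtT
    omega
  have htsval : ts = k - d := by
    rw [hts]
    exact le_antisymm (Nat.sInf_le htsA) (le_csInf ⟨_, htsA⟩ htslb)
  -- characterization of d = 0
  have hchar : finrank K ↥Ud = n ↔ d = 0 := by omega
  refine ⟨by omega, ?_, ?_, fun _ => hdouble⟩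
  · rw [hchar]
    constructor
    · intro h0
      have : W ⊓ (LinearMap.BilinForm.orthogonal σ Γ).restrictScalars K = ⊥ := by
        rw [hd] at h0
        exact Submodule.finrank_eq_zero.mp h0
      rw [inf_comm] at this
      exact this
    · intro hb
      rw [hd]
      rw [inf_comm] at hb
      rw [hb, finrank_bot]
  · rw [hchar]
    constructor
    · intro h0 H hH
      by_contra hcon
      push_neg at hcon
      have hle := hwt_le H
      have hwtH : wt U H = (n - k) + finrank L ↥H := by omega
      have := hF H hwtH
      omega
    · intro h3
      by_contra hne
      have hbot : W ⊓ (LinearMap.BilinForm.orthogonal σ Γ).restrictScalars K ≠ ⊥ := by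
        intro hb
        rw [hd, hb, finrank_bot] at hne
        exact hne rfl
      obtain ⟨z, hz, hz0⟩ := Submodule.exists_mem_ne_zero_of_ne_bot hbot
      have hsp : Submodule.span K {z} ≤ W ⊓ (LinearMap.BilinForm.orthogonal σ Γ).restrictScalars K := by
        rw [Submodule.span_le]
        simpa using hz
      obtain ⟨T, hT1, hT2⟩ := hE _ hsp
      rw [finrank_span_singleton hz0] at hT1 hT2
      have := h3 T (by omega)
      omega
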